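/- Let m ≥ 1, let a_1, …, a_m be pairwise distinct complex numbers with |a_j| = 1, let α_1, …, α_m be positive integers, set α := ∑_{j=1}^m α_j, and let f(X) := ∏_{j=1}^m (X − a_j)^{α_j}. Let n ≥ 1 and let p_n be the degree-n OPA to 1/f. Suppose p_n has exactly n pairwise distinct complex roots w_1, …, w_n. Then there exists a monic polynomial T ∈ ℂ[X] of degree at most m − 1 such that for every k with w_k ∉ {0, a_1, …, a_m} and T(w_k) ≠ 0: ∑_{j ≠ k} 1/(w_k − w_j) − ((n + α)/2)/w_k + ∑_{j=1}^m (α_j + 1/2)/(w_k − a_j) − (1/2)·T'(w_k)/T(w_k) = 0. -/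

import Mathlib

open Polynomial Complex

/-- The squared H² norm of a polynomial: `‖g‖² = ∑ₖ |gₖ|²`. -/
noncomputable def hnormSq (g : Polynomial ℂ) : ℝ :=
  ∑ᶠ k : ℕ, ‖g.coeff k‖ ^ 2

/-- `p` is the degree-`n` optimal polynomial approximant (OPA) to `1/f` in H². -/
def IsOPA (f : Polynomial ℂ) (n : ℕ) (p : Polynomial ℂ) : Prop :=
  p.degree ≤ (n : ℕ) ∧
    ∀ q : Polynomial ℂ, q.degree ≤ (n : ℕ) → hnormSq (1 - p * f) ≤ hnormSq (1 - q * f)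


lemma hnormSq_eq_sum (g : Polynomial ℂ) {M : ℕ} (h : g.natDegree < M) :
    hnormSq g = ∑ k ∈ Finset.range M, ‖g.coeff k‖ ^ 2 := by
  apply finsum_eq_sum_of_support_subset
  intro k hk
  simp only [Function.mem_support, ne_eq] at hk
  have : g.coeff k ≠ 0 := by
    intro h0; exact hk (by simp [h0])
  have := Polynomial.le_natDegree_of_ne_zero this
  simp only [Finset.coe_range, Set.mem_Iio]
  omega

lemma abs_sq_sub_mul (x y t : ℂ) :
    (‖x - t*y‖)^2 =
      (‖x‖)^2 - 2*((starRingEnd ℂ) t * (x * (starRingEnd ℂ) y)).re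
        + (‖t‖)^2*(‖y‖)^2 := by
  simp only [Complex.sq_norm, Complex.normSq_apply, Complex.sub_re, Complex.sub_im,
    Complex.mul_re, Complex.mul_im, Complex.conj_re, Complex.conj_im]
  ring

lemma orth_of_min {M : ℕ} (u v : Polynomial ℂ) (hu : u.natDegree < M) (hv : v.natDegree < M)
    (hmin : ∀ t : ℂ, hnormSq u ≤ hnormSq (u - Polynomial.C t * v)) :
    ∑ k ∈ Finset.range M, u.coeff k * (starRingEnd ℂ) (v.coeff k) = 0 := by
  set D := ∑ k ∈ Finset.range M, u.coeff k * (starRingEnd ℂ) (v.coeff k) with hD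
  set V := ∑ k ∈ Finset.range M, (‖v.coeff k‖)^2 with hV
  have hVnn : 0 ≤ V := Finset.sum_nonneg fun k _ => by positivity
  have hexp : ∀ t : ℂ, hnormSq (u - Polynomial.C t * v) =
      hnormSq u - 2*((starRingEnd ℂ) t * D).re + (‖t‖)^2 * V := by
    intro t
    have hdeg : (u - Polynomial.C t * v).natDegree < M := by
      apply lt_of_le_of_lt (Polynomial.natDegree_sub_le _ _)
      have : (Polynomial.C t * v).natDegree ≤ v.natDegree := by
        apply le_trans (Polynomial.natDegree_mul_le)
        simp
      omega
    rw [hnormSq_eq_sum _ hdeg, hnormSq_eq_sum u hu]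
    have : ∀ k ∈ Finset.range M,
        ‖(u - Polynomial.C t * v).coeff k‖ ^2 =
        (‖u.coeff k‖)^2
          - 2*((starRingEnd ℂ) t * (u.coeff k * (starRingEnd ℂ) (v.coeff k))).re
          + (‖t‖)^2*(‖v.coeff k‖)^2 := by
      intro k _
      rw [Polynomial.coeff_sub, Polynomial.coeff_C_mul]
      exact abs_sq_sub_mul _ _ t
    rw [Finset.sum_congr rfl this]
    rw [Finset.sum_add_distrib, Finset.sum_sub_distrib]
    congr 1
    · congr 1
      rw [← Finset.mul_sum, ← Complex.re_sum, ← Finset.mul_sum]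
    · rw [← Finset.mul_sum]
  by_cases hV0 : V = 0
  · apply Finset.sum_eq_zero
    intro k hk
    have h1 : ∀ k ∈ Finset.range M, (‖v.coeff k‖)^2 = 0 := by
      exact (Finset.sum_eq_zero_iff_of_nonneg (fun j _ => by positivity)).mp hV0
    have hv0 : v.coeff k = 0 := by
      have := h1 k hk
      have : ‖v.coeff k‖ = 0 := by
        nlinarith [norm_nonneg (v.coeff k)]
      exact norm_eq_zero.mp this
    simp [hv0]
  · have hVpos : 0 < V := lt_of_le_of_ne hVnn (Ne.symm hV0)
    have h := hmin ((V : ℂ)⁻¹ * D)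
    rw [hexp] at h
    have e1 : ((starRingEnd ℂ) ((V:ℂ)⁻¹ * D) * D).re = Complex.normSq D / V := by
      rw [map_mul, mul_assoc]
      rw [show (starRingEnd ℂ) D * D = ((Complex.normSq D : ℝ) : ℂ) by
        rw [mul_comm, Complex.mul_conj]]
      rw [show (starRingEnd ℂ) ((V:ℂ)⁻¹) = ((V:ℂ))⁻¹ by
        rw [map_inv₀, Complex.conj_ofReal]]
      rw [show ((V:ℂ))⁻¹ * ((Complex.normSq D : ℝ) : ℂ) = (((Complex.normSq D / V : ℝ)) : ℂ) by
        push_cast; ring]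
      exact Complex.ofReal_re _
    have e2 : (‖(V:ℂ)⁻¹ * D‖)^2 = Complex.normSq D / (V*V) := by
      rw [Complex.sq_norm, Complex.normSq_mul, Complex.normSq_inv, Complex.normSq_ofReal]
      ring
    rw [e1, e2] at h
    have e3 : Complex.normSq D / (V*V) * V = Complex.normSq D / V := by
      field_simp
    rw [e3] at h
    have h4 : Complex.normSq D / V ≤ 0 := by linarith
    have h5 : Complex.normSq D ≤ 0 := by
      by_contra hcon
      push_neg at hcon
      have : 0 < Complex.normSq D / V := div_pos hcon hVpos
      linarith
    have : Complex.normSq D = 0 := le_antisymm h5 (Complex.normSq_nonneg D)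
    exact Complex.normSq_eq_zero.mp this

lemma derivative_finset_prod {ι : Type*} [DecidableEq ι] (s : Finset ι) (g : ι → Polynomial ℂ) :
    Polynomial.derivative (∏ i ∈ s, g i) =
      ∑ i ∈ s, (∏ j ∈ s.erase i, g j) * Polynomial.derivative (g i) := by
  induction s using Finset.induction_on with
  | empty => simp
  | @insert x s hxs ih =>
    rw [Finset.prod_insert hxs, Polynomial.derivative_mul, ih, Finset.mul_sum,
      Finset.sum_insert hxs, Finset.erase_insert hxs]
    congr 1
    · ring
    · apply Finset.sum_congr rfl
      intro j hj
      rw [Finset.erase_insert_of_ne (by rintro rfl; exact hxs hj),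
        Finset.prod_insert (fun hmem => hxs (Finset.mem_of_mem_erase hmem))]
      ring

lemma reflect_one_X_sub_C (d : ℂ) :
    Polynomial.reflect 1 (Polynomial.X - Polynomial.C d) = 1 - Polynomial.C d * Polynomial.X := by
  ext i
  rw [Polynomial.coeff_reflect]
  match i with
  | 0 => simp [Polynomial.revAt_le, Polynomial.coeff_one, Polynomial.coeff_C_mul]
  | 1 => simp [Polynomial.revAt_le, Polynomial.coeff_one, Polynomial.coeff_C_mul]
  | (i+2) =>
    rw [Polynomial.revAt_eq_self_of_lt (by omega)]
    simp [Polynomial.coeff_one, Polynomial.coeff_C_mul, Polynomial.coeff_X, Polynomial.coeff_C]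

lemma reflect_pow_X_sub_C (d : ℂ) (hd : d * (starRingEnd ℂ) d = 1) (k : ℕ) :
    Polynomial.reflect k ((Polynomial.X - Polynomial.C d)^k)
      = (-(Polynomial.C d))^k * (Polynomial.X - Polynomial.C ((starRingEnd ℂ) d))^k := by
  induction k with
  | zero => simp
  | succ k ih =>
    have hb1 : ((Polynomial.X - Polynomial.C d)^k).natDegree ≤ k := by
      simp [Polynomial.natDegree_pow, Polynomial.natDegree_X_sub_C]
    have hb2 : (Polynomial.X - Polynomial.C d).natDegree ≤ 1 := by
      simp [Polynomial.natDegree_X_sub_C]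
    rw [pow_succ (Polynomial.X - Polynomial.C d)]
    rw [Polynomial.reflect_mul _ _ hb1 hb2]
    rw [ih, reflect_one_X_sub_C]
    have hd' : Polynomial.C d * Polynomial.C ((starRingEnd ℂ) d) = 1 := by
      rw [← Polynomial.C_mul, hd, Polynomial.C_1]
    linear_combination (-((-(Polynomial.C d))^k * (Polynomial.X - Polynomial.C ((starRingEnd ℂ) d))^k)) * hd'

lemma reflect_prod_pow {m : ℕ} (a : Fin m → ℂ) (α : Fin m → ℕ)
    (h : ∀ j, a j * (starRingEnd ℂ) (a j) = 1) (s : Finset (Fin m)) :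
    (Polynomial.map (starRingEnd ℂ) (∏ j ∈ s, (Polynomial.X - Polynomial.C (a j))^(α j))).reflect
        (∑ j ∈ s, α j)
      = (∏ j ∈ s, (-(Polynomial.C ((starRingEnd ℂ) (a j))))^(α j))
        * ∏ j ∈ s, (Polynomial.X - Polynomial.C (a j))^(α j) := by
  induction s using Finset.induction_on with
  | empty => simp
  | @insert x s hxs ih =>
    simp only [Finset.prod_insert hxs, Finset.sum_insert hxs, Polynomial.map_mul]
    have hb1 : (Polynomial.map (starRingEnd ℂ) ((Polynomial.X - Polynomial.C (a x))^(α x))).natDegree ≤ α x := by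
      simp only [Polynomial.map_pow, Polynomial.map_sub, Polynomial.map_X, Polynomial.map_C]
      simp [Polynomial.natDegree_pow, Polynomial.natDegree_X_sub_C]
    have hb2 : ((∏ j ∈ s, (Polynomial.X - Polynomial.C (a j))^(α j)).map (starRingEnd ℂ)).natDegree
        ≤ ∑ j ∈ s, α j := by
      refine le_trans (Polynomial.natDegree_map_le) ?_
      refine le_trans (Polynomial.natDegree_prod_le _ _) ?_
      apply Finset.sum_le_sum
      intro i _
      refine le_trans (Polynomial.natDegree_pow_le) ?_
      simp [Polynomial.natDegree_X_sub_C]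
    rw [Polynomial.reflect_mul _ _ hb1 hb2]
    rw [ih]
    simp only [Polynomial.map_pow, Polynomial.map_sub, Polynomial.map_X, Polynomial.map_C]
    have hx : (starRingEnd ℂ) (a x) * (starRingEnd ℂ) ((starRingEnd ℂ) (a x)) = 1 := by
      rw [Complex.conj_conj, mul_comm]; exact h x
    rw [reflect_pow_X_sub_C _ hx]
    rw [Complex.conj_conj]
    ring

set_option maxHeartbeats 1000000 in
theorem opa_generalized_jacobi_electrostatics
    (m : ℕ) (hm : 1 ≤ m) (a : Fin m → ℂ) (hainj : Function.Injective a)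
    (hmod : ∀ j, ‖a j‖ = 1)
    (α : Fin m → ℕ) (hα : ∀ j, 0 < α j)
    (n : ℕ) (hn : 1 ≤ n)
    (p : Polynomial ℂ)
    (hp : IsOPA (∏ j, (Polynomial.X - Polynomial.C (a j)) ^ (α j)) n p)
    (c : ℂ) (hc : c ≠ 0)
    (w : Fin n → ℂ) (hwinj : Function.Injective w)
    (hroots : p = Polynomial.C c * ∏ j, (Polynomial.X - Polynomial.C (w j))) :
    ∃ T : Polynomial ℂ, T.Monic ∧ T.degree ≤ ((m - 1 : ℕ) : WithBot ℕ) ∧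
      ∀ k : Fin n, w k ≠ 0 → (∀ j, w k ≠ a j) → T.eval (w k) ≠ 0 →
        (∑ j ∈ Finset.univ.erase k, 1 / (w k - w j)) -
          (((n : ℂ) + ((∑ j, (α j : ℕ) : ℕ) : ℂ)) / 2) / w k +
          (∑ j, (((α j : ℕ) : ℂ) + 1 / 2) / (w k - a j)) -
          (1 / 2) * (Polynomial.derivative T).eval (w k) / T.eval (w k) = 0 := by
  obtain ⟨m', rfl⟩ : ∃ m', m = m' + 1 := ⟨m - 1, by omega⟩
  obtain ⟨n', rfl⟩ : ∃ n', n = n' + 1 := ⟨n - 1, by omega⟩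
  set A : ℕ := ∑ j, α j with hA_def
  set f : Polynomial ℂ := ∏ j, (Polynomial.X - Polynomial.C (a j)) ^ (α j) with hf_def
  set F : Polynomial ℂ := ∏ j, (Polynomial.X - Polynomial.C (a j)) with hF_def
  set G : Polynomial ℂ :=
    ∑ j, Polynomial.C ((α j : ℕ) : ℂ) *
      ∏ i ∈ Finset.univ.erase j, (Polynomial.X - Polynomial.C (a i)) with hG_def
  -- ## basic facts
  have hamul : ∀ j, a j * (starRingEnd ℂ) (a j) = 1 := by
    intro j
    rw [Complex.mul_conj, Complex.normSq_eq_norm_sq, hmod]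
    norm_num
  have ha0 : ∀ j, a j ≠ 0 := by
    intro j h
    have := hmod j
    rw [h] at this
    simp at this
  have hfm : f.Monic := by
    rw [hf_def]
    exact monic_prod_of_monic _ _ fun j _ => (monic_X_sub_C (a j)).pow (α j)
  have hf0 : f ≠ 0 := hfm.ne_zero
  have hfdeg : f.natDegree = A := by
    rw [hf_def, Polynomial.natDegree_prod _ _ fun j _ => pow_ne_zero _ (X_sub_C_ne_zero (a j))]
    simp [Polynomial.natDegree_pow, Polynomial.natDegree_X_sub_C, hA_def]
  have hFm : F.Monic := by
    rw [hF_def]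
    exact monic_prod_of_monic _ _ fun j _ => monic_X_sub_C (a j)
  have hFdeg : F.natDegree = m' + 1 := by
    rw [hF_def, Polynomial.natDegree_prod _ _ fun j _ => X_sub_C_ne_zero (a j)]
    simp [Polynomial.natDegree_X_sub_C]
  have hA1 : 1 ≤ A := by
    rw [hA_def]
    calc 1 ≤ α ⟨0, by omega⟩ := hα _
    _ ≤ ∑ j, α j := Finset.single_le_sum (fun i _ => Nat.zero_le _) (Finset.mem_univ _)
  obtain ⟨A', hA'⟩ : ∃ A', A = A' + 1 := ⟨A - 1, by omega⟩
  have hpdeg : p.natDegree ≤ n' + 1 := natDegree_le_iff_degree_le.mpr hp.1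
  have hprodm : (∏ j, (Polynomial.X - Polynomial.C (w j))).Monic :=
    monic_prod_of_monic _ _ fun j _ => monic_X_sub_C (w j)
  have hprodnd : (∏ j, (Polynomial.X - Polynomial.C (w j))).natDegree = n' + 1 := by
    rw [Polynomial.natDegree_prod _ _ fun j _ => X_sub_C_ne_zero (w j)]
    simp [Polynomial.natDegree_X_sub_C]
  have hpcn : p.coeff (n' + 1) = c := by
    have h1 := hprodm.coeff_natDegree
    rw [hprodnd] at h1
    rw [hroots, Polynomial.coeff_C_mul, h1, mul_one]
  have hp0 : p ≠ 0 := fun h => hc (by simpa [h] using hpcn.symm)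
  -- ## orthogonality
  set u : Polynomial ℂ := 1 - p * f with hu_def
  have hudeg : u.natDegree ≤ n' + 1 + A := by
    rw [hu_def]
    refine le_trans (natDegree_sub_le _ _) ?_
    simp only [natDegree_one]
    refine max_le (by omega) ?_
    refine le_trans natDegree_mul_le ?_
    rw [hfdeg]
    omega
  have horth : ∀ e, e ≤ n' + 1 →
      ∑ k ∈ Finset.range (n' + 1 + A + 1), u.coeff k *
        (starRingEnd ℂ) ((Polynomial.X^e * f).coeff k) = 0 := by
    intro e he
    apply orth_of_min
    · omega
    · refine lt_of_le_of_lt (le_trans natDegree_mul_le ?_) (show e + A < n' + 1 + A + 1 by omega)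
      rw [natDegree_X_pow, hfdeg]
    · intro t
      have hq : (p + Polynomial.C t * Polynomial.X^e).degree ≤ ((n' + 1 : ℕ) : WithBot ℕ) := by
        refine le_trans (degree_add_le _ _) (max_le hp.1 ?_)
        refine le_trans (degree_mul_le _ _) ?_
        rw [degree_X_pow]
        refine le_trans (add_le_add_left degree_C_le _) ?_
        rw [zero_add]
        exact_mod_cast he
      have h2 := hp.2 _ hq
      have h3 : 1 - (p + Polynomial.C t * Polynomial.X^e) * f
          = u - Polynomial.C t * (Polynomial.X^e * f) := by
        rw [hu_def]; ring
      rwa [h3] at h2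
  -- ## self-inversive
  set γ : ℂ := ∏ j, (-((starRingEnd ℂ) (a j)))^(α j) with hγ_def
  have hγf : (Polynomial.map (starRingEnd ℂ) f).reflect A = Polynomial.C γ * f := by
    rw [hf_def, hA_def, reflect_prod_pow a α hamul Finset.univ]
    congr 1
    rw [hγ_def, map_prod]
    simp only [map_pow, map_neg]
  have hγ0 : γ ≠ 0 := by
    rw [hγ_def]
    apply Finset.prod_ne_zero_iff.mpr
    intro j _
    apply pow_ne_zero
    simp [ha0 j]
  have hconj : ∀ i ≤ A, (starRingEnd ℂ) (f.coeff i) = γ * f.coeff (A - i) := by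
    intro i hi
    have h1 := congrArg (fun q => Polynomial.coeff q (A - i)) hγf
    simp only [Polynomial.coeff_reflect, Polynomial.coeff_map, Polynomial.coeff_C_mul] at h1
    rwa [Polynomial.revAt_le (by omega : A - i ≤ A), (by omega : A - (A - i) = i)] at h1
  -- ## the gap
  have hgap : ∀ e, e ≤ n' + 1 → (p * f^2).coeff (A + e) = f.coeff (A + e) := by
    intro e he
    have hS := horth e he
    have hstep1 : ∑ k ∈ Finset.range (A + e + 1), u.coeff k *
        (starRingEnd ℂ) ((Polynomial.X^e * f).coeff k)
        = ∑ k ∈ Finset.range (n' + 1 + A + 1), u.coeff k *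
          (starRingEnd ℂ) ((Polynomial.X^e * f).coeff k) := by
      apply Finset.sum_subset
      · exact Finset.range_subset_range.mpr (by omega)
      · intro k hk hnk
        simp only [Finset.mem_range] at hk hnk
        rw [Polynomial.coeff_X_pow_mul', if_pos (by omega),
          Polynomial.coeff_eq_zero_of_natDegree_lt (show f.natDegree < k - e by rw [hfdeg]; omega)]
        simp
    have hstep2 : ∑ k ∈ Finset.range (A + e + 1), u.coeff k *
        (starRingEnd ℂ) ((Polynomial.X^e * f).coeff k)
        = γ * ∑ k ∈ Finset.range (A + e + 1), u.coeff k * f.coeff (A + e - k) := by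
      rw [Finset.mul_sum]
      apply Finset.sum_congr rfl
      intro k hk
      simp only [Finset.mem_range] at hk
      rw [Polynomial.coeff_X_pow_mul']
      by_cases hek : e ≤ k
      · rw [if_pos hek, hconj (k - e) (by omega), (by omega : A - (k - e) = A + e - k)]
        ring
      · rw [if_neg hek,
          Polynomial.coeff_eq_zero_of_natDegree_lt (show f.natDegree < A + e - k by rw [hfdeg]; omega)]
        simp
    have hstep3 : (u * f).coeff (A + e)
        = ∑ k ∈ Finset.range (A + e + 1), u.coeff k * f.coeff (A + e - k) := by
      rw [Polynomial.coeff_mul, Finset.Nat.sum_antidiagonal_eq_sum_range_succ_mk]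
    have huf : (u * f).coeff (A + e) = 0 := by
      have h4 : γ * (u * f).coeff (A + e) = 0 := by rw [hstep3, ← hstep2, hstep1, hS]
      exact (mul_eq_zero.mp h4).resolve_left hγ0
    have huf2 : u * f = f - p * f^2 := by rw [hu_def]; ring
    rw [huf2, Polynomial.coeff_sub] at huf
    exact (sub_eq_zero.mp huf).symm
  -- ## decomposition  Y = y + X^(Nn+1) * b
  set y : Polynomial ℂ := (p * f^2) %ₘ (Polynomial.X^(n' + 1 + A + 1)) with hy_def
  set b : Polynomial ℂ := (p * f^2) /ₘ (Polynomial.X^(n' + 1 + A + 1)) with hb_def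
  have hmono : (Polynomial.X^(n' + 1 + A + 1) : Polynomial ℂ).Monic := monic_X_pow _
  have hsplit : p * f^2 = y + Polynomial.X^(n' + 1 + A + 1) * b :=
    (Polynomial.modByMonic_add_div (p * f^2) (Polynomial.X^(n' + 1 + A + 1))).symm
  have hYdeg : (p * f^2).natDegree ≤ n' + 1 + 2*A := by
    refine le_trans natDegree_mul_le ?_
    rw [Polynomial.natDegree_pow, hfdeg]
    omega
  have hydeglt : y.degree < ((n' + 1 + A + 1 : ℕ) : WithBot ℕ) := by
    have := Polynomial.degree_modByMonic_lt (p * f^2) hmono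
    rwa [Polynomial.degree_X_pow] at this
  have hycoeff_hi : ∀ j, n' + 1 + A + 1 ≤ j → y.coeff j = 0 := by
    intro j hj
    refine Polynomial.coeff_eq_zero_of_degree_lt (lt_of_lt_of_le hydeglt ?_)
    exact_mod_cast hj
  have hyeq : y = p * f^2 - Polynomial.X^(n' + 1 + A + 1) * b := by
    rw [hsplit]; ring
  have hycoeff : ∀ j, A < j → y.coeff j = 0 := by
    intro j hj
    by_cases hj2 : n' + 1 + A + 1 ≤ j
    · exact hycoeff_hi j hj2
    · rw [hyeq, Polynomial.coeff_sub, Polynomial.coeff_X_pow_mul', if_neg (by omega)]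
      have h5 : (p * f^2).coeff j = f.coeff j := by
        have := hgap (j - A) (by omega)
        rwa [(by omega : A + (j - A) = j)] at this
      rw [h5, Polynomial.coeff_eq_zero_of_natDegree_lt (show f.natDegree < j by rw [hfdeg]; omega)]
      ring
  have hydeg : y.natDegree ≤ A := Polynomial.natDegree_le_iff_coeff_eq_zero.mpr hycoeff
  have hbdeg : b.natDegree ≤ A' := by
    refine Polynomial.natDegree_le_iff_coeff_eq_zero.mpr ?_
    intro N hN
    have h2 : b.coeff N = (Polynomial.X^(n' + 1 + A + 1) * b).coeff (N + (n' + 1 + A + 1)) :=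
      (Polynomial.coeff_X_pow_mul b (n' + 1 + A + 1) N).symm
    have h3 : (Polynomial.X^(n' + 1 + A + 1) * b) = p * f^2 - y := by rw [hsplit]; ring
    rw [h2, h3, Polynomial.coeff_sub,
      Polynomial.coeff_eq_zero_of_natDegree_lt
        (show (p * f^2).natDegree < N + (n' + 1 + A + 1) by omega),
      hycoeff_hi _ (by omega)]
    ring
  have hfcA : f.coeff A = 1 := by
    have := hfm.coeff_natDegree
    rwa [hfdeg] at this
  have hyA : y.coeff A = 1 := by
    rw [hyeq, Polynomial.coeff_sub, Polynomial.coeff_X_pow_mul', if_neg (by omega)]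
    have h5 : (p * f^2).coeff A = f.coeff A := by
      have := hgap 0 (by omega)
      rwa [add_zero] at this
    rw [h5, hfcA]
    ring
  have hy0 : y ≠ 0 := fun h => by simp [h] at hyA
  -- ## the structure polynomial
  set Q : Polynomial ℂ := F * Polynomial.derivative p + 2 * G * p with hQ_def
  set C₁ : Polynomial ℂ := Polynomial.C ((n' + 1 + A + 1 : ℕ) : ℂ) * b
    + Polynomial.X * Polynomial.derivative b with hC₁_def
  set 𝒸 : Polynomial ℂ := F * p * C₁ - Polynomial.X * b * Q with h𝒸_def
  have hGf : F * Polynomial.derivative f = G * f := by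
    rw [hf_def, hF_def, hG_def]
    rw [derivative_finset_prod]
    rw [Finset.mul_sum, Finset.sum_mul]
    apply Finset.sum_congr rfl
    intro j _
    rw [Polynomial.derivative_X_sub_C_pow]
    have e2 : ∏ i, (Polynomial.X - Polynomial.C (a i))
        = (Polynomial.X - Polynomial.C (a j)) * ∏ i ∈ Finset.univ.erase j, (Polynomial.X - Polynomial.C (a i)) :=
      (Finset.mul_prod_erase _ _ (Finset.mem_univ j)).symm
    have e3 : ∏ i, (Polynomial.X - Polynomial.C (a i))^(α i)
        = (Polynomial.X - Polynomial.C (a j))^(α j) * ∏ i ∈ Finset.univ.erase j, (Polynomial.X - Polynomial.C (a i))^(α i) :=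
      (Finset.mul_prod_erase _ _ (Finset.mem_univ j)).symm
    rw [e2, e3]
    have e1 : (α j - 1) + 1 = α j := Nat.succ_pred_eq_of_pos (hα j)
    rw [show (Polynomial.X - Polynomial.C (a j))^(α j)
        = (Polynomial.X - Polynomial.C (a j))^(α j - 1) * (Polynomial.X - Polynomial.C (a j)) by
      rw [← pow_succ, e1]]
    ring
  have hkey : Polynomial.X^(n' + 1 + A) * 𝒸 = y * Q - F * p * Polynomial.derivative y := by
    have h1 := congrArg Polynomial.derivative hsplit
    rw [Polynomial.derivative_add, Polynomial.derivative_mul, Polynomial.derivative_mul,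
      Polynomial.derivative_pow, Polynomial.derivative_X_pow] at h1
    simp only [Nat.add_sub_cancel, show (2:ℕ) - 1 = 1 from rfl, pow_one,
      Nat.cast_ofNat, map_ofNat] at h1
    rw [h𝒸_def, hC₁_def]
    linear_combination (-(p * F)) * h1 + (2*p^2*f) * hGf
      + (F * Polynomial.derivative p + 2 * G * p) * hsplit
  -- ## coefficient facts
  have hGdeg : G.natDegree ≤ m' := by
    rw [hG_def]
    apply Polynomial.natDegree_sum_le_of_forall_le
    intro j _
    refine le_trans natDegree_mul_le ?_
    rw [Polynomial.natDegree_C, zero_add]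
    refine le_trans (Polynomial.natDegree_prod_le _ _) ?_
    refine le_trans (Finset.sum_le_sum (fun i _ => le_of_eq (Polynomial.natDegree_X_sub_C (a i)))) ?_
    simp [Finset.card_erase_of_mem]
  have hperase : ∀ j : Fin (m' + 1),
      (∏ i ∈ Finset.univ.erase j, (Polynomial.X - Polynomial.C (a i))).coeff m' = 1 := by
    intro j
    have hmono2 : (∏ i ∈ Finset.univ.erase j, (Polynomial.X - Polynomial.C (a i))).Monic :=
      monic_prod_of_monic _ _ fun i _ => monic_X_sub_C (a i)
    have hnd : (∏ i ∈ Finset.univ.erase j, (Polynomial.X - Polynomial.C (a i))).natDegree = m' := by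
      rw [Polynomial.natDegree_prod _ _ fun i _ => X_sub_C_ne_zero (a i)]
      simp [Polynomial.natDegree_X_sub_C, Finset.card_erase_of_mem]
    have := hmono2.coeff_natDegree
    rwa [hnd] at this
  have hGco : G.coeff m' = (A : ℂ) := by
    rw [hG_def, Polynomial.finset_sum_coeff]
    have h6 : ∀ j ∈ Finset.univ, (Polynomial.C ((α j : ℕ) : ℂ) *
        ∏ i ∈ Finset.univ.erase j, (Polynomial.X - Polynomial.C (a i))).coeff m' = ((α j : ℕ) : ℂ) := by
      intro j _
      rw [Polynomial.coeff_C_mul, hperase j, mul_one]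
    rw [Finset.sum_congr rfl h6, hA_def]
    push_cast
    ring
  have hFcm : F.coeff (m' + 1) = 1 := by
    have := hFm.coeff_natDegree
    rwa [hFdeg] at this
  have hderp_deg : (Polynomial.derivative p).natDegree ≤ n' :=
    le_trans (Polynomial.natDegree_derivative_le p) (by omega)
  have hQdeg : Q.natDegree ≤ m' + n' + 1 := by
    rw [hQ_def]
    refine le_trans (natDegree_add_le _ _) (max_le ?_ ?_)
    · refine le_trans natDegree_mul_le ?_
      rw [hFdeg]
      omega
    · refine le_trans natDegree_mul_le ?_
      have h7 : (2 * G : Polynomial ℂ).natDegree ≤ m' := by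
        refine le_trans natDegree_mul_le ?_
        simpa using hGdeg
      omega
  have hQco : Q.coeff (m' + n' + 1) = (((n' + 1 : ℕ) : ℂ) + 2 * (A : ℂ)) * c := by
    rw [hQ_def, Polynomial.coeff_add]
    have e1 : (F * Polynomial.derivative p).coeff (m' + n' + 1) = c * ((n' + 1 : ℕ) : ℂ) := by
      rw [show m' + n' + 1 = (m' + 1) + n' by omega]
      rw [Polynomial.coeff_mul_add_eq_of_natDegree_le (le_of_eq hFdeg) hderp_deg]
      rw [hFcm, one_mul, Polynomial.coeff_derivative, hpcn]
      push_cast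
      ring
    have h2G : ∀ k, (2 * G : Polynomial ℂ).coeff k = 2 * G.coeff k := by
      intro k
      rw [show (2 : Polynomial ℂ) = Polynomial.C 2 from (map_ofNat Polynomial.C 2).symm, Polynomial.coeff_C_mul]
    have e2 : (2 * G * p).coeff (m' + n' + 1) = 2 * (A : ℂ) * c := by
      rw [show m' + n' + 1 = m' + (n' + 1) by omega]
      rw [Polynomial.coeff_mul_add_eq_of_natDegree_le
        (show (2 * G : Polynomial ℂ).natDegree ≤ m' from
          le_trans natDegree_mul_le (by simpa using hGdeg)) hpdeg]
      rw [h2G, hGco, hpcn]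
    rw [e1, e2]
    push_cast
    ring
  -- ## 𝒸 is not zero
  have hcne : 𝒸 ≠ 0 := by
    intro h0
    rw [h0, mul_zero] at hkey
    have hid : y * Q = F * p * Polynomial.derivative y := sub_eq_zero.mp hkey.symm
    have hydeg' : (Polynomial.derivative y).natDegree ≤ A' :=
      le_trans (Polynomial.natDegree_derivative_le y) (by omega)
    have hL : (y * Q).coeff (A + (m' + n' + 1)) = (((n' + 1 : ℕ) : ℂ) + 2 * (A : ℂ)) * c := by
      rw [Polynomial.coeff_mul_add_eq_of_natDegree_le hydeg hQdeg, hyA, hQco, one_mul]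
    have hR : (F * p * Polynomial.derivative y).coeff (A + (m' + n' + 1)) = c * (A : ℂ) := by
      rw [show A + (m' + n' + 1) = ((m' + 1) + (n' + 1)) + A' by omega]
      rw [Polynomial.coeff_mul_add_eq_of_natDegree_le
        (show (F * p).natDegree ≤ (m' + 1) + (n' + 1) from
          le_trans natDegree_mul_le (by rw [hFdeg]; omega)) hydeg']
      rw [Polynomial.coeff_mul_add_eq_of_natDegree_le (le_of_eq hFdeg) hpdeg, hFcm, hpcn, one_mul]
      rw [Polynomial.coeff_derivative]
      rw [show A' + 1 = A by omega, hyA, one_mul]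
      push_cast [hA']
      ring
    rw [hid, hR] at hL
    have h8 : (A : ℂ) = ((n' + 1 : ℕ) : ℂ) + 2 * (A : ℂ) :=
      mul_left_cancel₀ hc (by linear_combination hL)
    have h9 : (A : ℕ) = n' + 1 + 2 * A := by exact_mod_cast h8
    omega
  -- ## degree of 𝒸
  have hcdeg : 𝒸.natDegree ≤ m' := by
    have h1 : (Polynomial.X^(n' + 1 + A) * 𝒸).natDegree = (n' + 1 + A) + 𝒸.natDegree := by
      rw [Polynomial.natDegree_mul (pow_ne_zero _ Polynomial.X_ne_zero) hcne,
        Polynomial.natDegree_X_pow]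
    have h2 : (y * Q - F * p * Polynomial.derivative y).natDegree ≤ n' + 1 + A + m' := by
      refine le_trans (natDegree_sub_le _ _) (max_le ?_ ?_)
      · exact le_trans natDegree_mul_le (by omega)
      · refine le_trans natDegree_mul_le ?_
        have h3 : (F * p).natDegree ≤ (m' + 1) + (n' + 1) :=
          le_trans natDegree_mul_le (by rw [hFdeg]; omega)
        have h4 : (Polynomial.derivative y).natDegree ≤ A' :=
          le_trans (Polynomial.natDegree_derivative_le y) (by omega)
        omega
    rw [← hkey, h1] at h2
    omega
  -- ## construct T and conclude
  refine ⟨𝒸 * Polynomial.C (𝒸.leadingCoeff)⁻¹, Polynomial.monic_mul_leadingCoeff_inv hcne, ?_, ?_⟩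
  · have h1 : (𝒸 * Polynomial.C (𝒸.leadingCoeff)⁻¹).natDegree ≤ m' := by
      refine le_trans natDegree_mul_le ?_
      rw [Polynomial.natDegree_C]
      omega
    refine le_trans Polynomial.degree_le_natDegree ?_
    rw [show (m' + 1 - 1 : ℕ) = m' by omega]
    exact_mod_cast h1
  · intro k hk0 hka hkT
    have hlc0 : (𝒸.leadingCoeff)⁻¹ ≠ 0 := inv_ne_zero (Polynomial.leadingCoeff_ne_zero.mpr hcne)
    set w₀ := w k with hw₀
    have hroot : p.eval w₀ = 0 := by
      rw [hroots]
      simp only [Polynomial.eval_mul, Polynomial.eval_C, Polynomial.eval_prod]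
      apply mul_eq_zero_of_right
      apply Finset.prod_eq_zero (Finset.mem_univ k)
      simp [hw₀]
    set ρ : Polynomial ℂ := ∏ j ∈ Finset.univ.erase k, (Polynomial.X - Polynomial.C (w j))
      with hρ_def
    have hpfac : p = Polynomial.C c * ((Polynomial.X - Polynomial.C w₀) * ρ) := by
      rw [hroots, hρ_def, ← Finset.mul_prod_erase _ _ (Finset.mem_univ k)]
    have hρev : ρ.eval w₀ = ∏ j ∈ Finset.univ.erase k, (w₀ - w j) := by
      rw [hρ_def, Polynomial.eval_prod]
      simp
    have hρ0 : ρ.eval w₀ ≠ 0 := by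
      rw [hρev]
      apply Finset.prod_ne_zero_iff.mpr
      intro j hj
      have hne : k ≠ j := fun h => (Finset.mem_erase.mp hj).1 h.symm
      exact sub_ne_zero_of_ne (fun hh => hne (hwinj hh))
    have hdp : Polynomial.derivative p
        = Polynomial.C c * (ρ + (Polynomial.X - Polynomial.C w₀) * Polynomial.derivative ρ) := by
      rw [hpfac]
      simp only [Polynomial.derivative_mul, Polynomial.derivative_C, Polynomial.derivative_sub,
        Polynomial.derivative_X, Polynomial.derivative_C, zero_mul, sub_zero]
      ring
    have hq1 : (Polynomial.derivative p).eval w₀ = c * ρ.eval w₀ := by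
      rw [hdp]
      simp [Polynomial.eval_mul, Polynomial.eval_add, Polynomial.eval_sub]
    have hddp : (Polynomial.derivative (Polynomial.derivative p)).eval w₀
        = 2 * c * (Polynomial.derivative ρ).eval w₀ := by
      rw [hdp, Polynomial.derivative_mul]
      simp only [Polynomial.derivative_C, zero_mul, zero_add, Polynomial.derivative_add,
        Polynomial.derivative_mul, Polynomial.derivative_sub, Polynomial.derivative_X,
        Polynomial.derivative_C, sub_zero, one_mul]
      simp only [Polynomial.eval_mul, Polynomial.eval_C, Polynomial.eval_add, Polynomial.eval_sub,
        Polynomial.eval_X, sub_self, zero_mul, add_zero]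
      ring
    have hdρev : (Polynomial.derivative ρ).eval w₀
        = ∑ j ∈ Finset.univ.erase k, ∏ i ∈ (Finset.univ.erase k).erase j, (w₀ - w i) := by
      rw [hρ_def, derivative_finset_prod]
      simp [Polynomial.eval_finset_sum, Polynomial.eval_prod]
    have hs1 : (∑ j ∈ Finset.univ.erase k, 1 / (w₀ - w j)) * ρ.eval w₀
        = (Polynomial.derivative ρ).eval w₀ := by
      rw [hdρev, hρev, Finset.sum_mul]
      apply Finset.sum_congr rfl
      intro j hj
      rw [← Finset.mul_prod_erase _ _ hj]
      have hne : k ≠ j := fun h => (Finset.mem_erase.mp hj).1 h.symm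
      have hz : w₀ - w j ≠ 0 := sub_ne_zero_of_ne (fun hh => hne (hwinj hh))
      rw [one_div, inv_mul_cancel_left₀ hz]
    have hFev : F.eval w₀ = ∏ j, (w₀ - a j) := by
      rw [hF_def, Polynomial.eval_prod]
      simp
    have hF0 : F.eval w₀ ≠ 0 := by
      rw [hFev]
      apply Finset.prod_ne_zero_iff.mpr
      intro j _
      exact sub_ne_zero_of_ne (hka j)
    have hdFev : (Polynomial.derivative F).eval w₀
        = ∑ j, ∏ i ∈ Finset.univ.erase j, (w₀ - a i) := by
      rw [hF_def, derivative_finset_prod]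
      simp [Polynomial.eval_finset_sum, Polynomial.eval_prod]
    have hGev : G.eval w₀ = ∑ j, ((α j : ℕ) : ℂ) * ∏ i ∈ Finset.univ.erase j, (w₀ - a i) := by
      rw [hG_def]
      simp [Polynomial.eval_finset_sum, Polynomial.eval_prod]
    have hsum2 : (∑ j, (((α j : ℕ) : ℂ) + 1/2) / (w₀ - a j)) * F.eval w₀
        = G.eval w₀ + (Polynomial.derivative F).eval w₀ / 2 := by
      rw [hGev, hdFev, hFev, Finset.sum_mul, Finset.sum_div, ← Finset.sum_add_distrib]
      apply Finset.sum_congr rfl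
      intro j _
      rw [← Finset.mul_prod_erase Finset.univ _ (Finset.mem_univ j)]
      have hz : w₀ - a j ≠ 0 := sub_ne_zero_of_ne (hka j)
      field_simp
    have hQev : Q.eval w₀ = F.eval w₀ * (Polynomial.derivative p).eval w₀ := by
      rw [hQ_def]
      simp [Polynomial.eval_add, Polynomial.eval_mul, hroot]
    have hC₁ev : C₁.eval w₀ = ((n' + 1 + A + 1 : ℕ) : ℂ) * b.eval w₀
        + w₀ * (Polynomial.derivative b).eval w₀ := by
      rw [hC₁_def]
      simp [Polynomial.eval_add, Polynomial.eval_mul]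
    have hcev : 𝒸.eval w₀
        = -(w₀ * b.eval w₀ * (F.eval w₀ * (Polynomial.derivative p).eval w₀)) := by
      rw [h𝒸_def]
      simp only [Polynomial.eval_sub, Polynomial.eval_mul, Polynomial.eval_X, hroot, hQev,
        mul_zero, zero_mul]
      ring
    have hcev0 : 𝒸.eval w₀ ≠ 0 := by
      intro h
      exact hkT (by rw [Polynomial.eval_mul, Polynomial.eval_C, h, zero_mul])
    have hb0 : b.eval w₀ ≠ 0 := by
      intro h
      apply hcev0
      rw [hcev, h]
      ring
    have hderQ : (Polynomial.derivative Q).eval w₀ =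
        (Polynomial.derivative F).eval w₀ * (Polynomial.derivative p).eval w₀
        + F.eval w₀ * (Polynomial.derivative (Polynomial.derivative p)).eval w₀
        + 2 * (G.eval w₀ * (Polynomial.derivative p).eval w₀) := by
      rw [hQ_def]
      simp only [Polynomial.derivative_add, Polynomial.derivative_mul, Polynomial.eval_add,
        Polynomial.eval_mul, hroot, mul_zero, add_zero, Polynomial.eval_ofNat]
      ring
    have hderc : (Polynomial.derivative 𝒸).eval w₀ =
        F.eval w₀ * (Polynomial.derivative p).eval w₀ * C₁.eval w₀
        - (b.eval w₀ * Q.eval w₀ + w₀ * ((Polynomial.derivative b).eval w₀ * Q.eval w₀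
          + b.eval w₀ * (Polynomial.derivative Q).eval w₀)) := by
      rw [h𝒸_def]
      simp only [Polynomial.derivative_sub, Polynomial.derivative_mul, Polynomial.derivative_X,
        Polynomial.eval_sub, Polynomial.eval_add, Polynomial.eval_mul, Polynomial.eval_X, one_mul,
        hroot, mul_zero, zero_mul, add_zero, zero_add]
      ring
    -- assemble
    rw [show Polynomial.derivative (𝒸 * Polynomial.C (𝒸.leadingCoeff)⁻¹)
        = Polynomial.derivative 𝒸 * Polynomial.C (𝒸.leadingCoeff)⁻¹ by
      rw [Polynomial.derivative_mul, Polynomial.derivative_C, mul_zero, add_zero]]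
    rw [Polynomial.eval_mul, Polynomial.eval_mul, Polynomial.eval_C]
    have hcancel : (1:ℂ)/2 * ((Polynomial.derivative 𝒸).eval w₀ * (𝒸.leadingCoeff)⁻¹)
        / (𝒸.eval w₀ * (𝒸.leadingCoeff)⁻¹)
        = (1:ℂ)/2 * (Polynomial.derivative 𝒸).eval w₀ / 𝒸.eval w₀ := by
      rw [div_eq_div_iff (mul_ne_zero hcev0 hlc0) hcev0]
      ring
    rw [hcancel]
    have hs1' : (∑ j ∈ Finset.univ.erase k, 1 / (w₀ - w j))
        = (Polynomial.derivative ρ).eval w₀ / ρ.eval w₀ := by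
      rw [eq_div_iff hρ0]
      exact hs1
    have hsum2' : (∑ j, (((α j : ℕ) : ℂ) + 1/2) / (w₀ - a j))
        = (G.eval w₀ + (Polynomial.derivative F).eval w₀ / 2) / F.eval w₀ := by
      rw [eq_div_iff hF0]
      exact hsum2
    rw [hs1', hsum2', hderc, hQev, hC₁ev, hderQ, hddp, hq1]
    field_simp [hρ0, hF0, hk0, hcev0]
    rw [hcev, hq1]
    push_cast
    ring
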